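/- For all integers n ≥ 1 and all k with 0 ≤ k ≤ n, R_{k,2n} = R_{n−k,2n}; that is, the polynomial R_{2n}(x) = Σ_k R_{k,2n} xᵏ is symmetric. -/

import Mathlib

namespace DescentParity

/-- Number of descent positions i (1-indexed adjacent pairs) of a permutation of {1,…,m}
    whose first (larger) entry is even. Entries of `Fin m` represent values via `(·:ℕ)+1`. -/
def desBegE (m : ℕ) (σ : Equiv.Perm (Fin m)) : ℕ :=
  (Finset.univ.filter (fun p : Fin m × Fin m =>
    (p.2 : ℕ) = (p.1 : ℕ) + 1 ∧ σ p.2 < σ p.1 ∧ Even ((σ p.1 : ℕ) + 1))).card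

def desEndE (m : ℕ) (σ : Equiv.Perm (Fin m)) : ℕ :=
  (Finset.univ.filter (fun p : Fin m × Fin m =>
    (p.2 : ℕ) = (p.1 : ℕ) + 1 ∧ σ p.2 < σ p.1 ∧ Even ((σ p.2 : ℕ) + 1))).card

def desBegO (m : ℕ) (σ : Equiv.Perm (Fin m)) : ℕ :=
  (Finset.univ.filter (fun p : Fin m × Fin m =>
    (p.2 : ℕ) = (p.1 : ℕ) + 1 ∧ σ p.2 < σ p.1 ∧ Odd ((σ p.1 : ℕ) + 1))).card

def desEndO (m : ℕ) (σ : Equiv.Perm (Fin m)) : ℕ :=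
  (Finset.univ.filter (fun p : Fin m × Fin m =>
    (p.2 : ℕ) = (p.1 : ℕ) + 1 ∧ σ p.2 < σ p.1 ∧ Odd ((σ p.2 : ℕ) + 1))).card

/-- The first entry σ₁ of the permutation is even. -/
def firstEven (m : ℕ) (σ : Equiv.Perm (Fin m)) : Prop :=
  ∃ i : Fin m, (i : ℕ) = 0 ∧ Even ((σ i : ℕ) + 1)

def firstOdd (m : ℕ) (σ : Equiv.Perm (Fin m)) : Prop :=
  ∃ i : Fin m, (i : ℕ) = 0 ∧ Odd ((σ i : ℕ) + 1)

instance (m : ℕ) (σ : Equiv.Perm (Fin m)) : Decidable (firstEven m σ) := by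
  unfold firstEven; infer_instance

instance (m : ℕ) (σ : Equiv.Perm (Fin m)) : Decidable (firstOdd m σ) := by
  unfold firstOdd; infer_instance

def R (k m : ℕ) : ℕ :=
  (Finset.univ.filter (fun σ : Equiv.Perm (Fin m) => desBegE m σ = k)).card

def M (k m : ℕ) : ℕ :=
  (Finset.univ.filter (fun σ : Equiv.Perm (Fin m) => desBegO m σ = k)).card

def P0 (k m : ℕ) : ℕ :=
  (Finset.univ.filter (fun σ : Equiv.Perm (Fin m) => firstOdd m σ ∧ desEndE m σ = k)).card

def P1 (k m : ℕ) : ℕ :=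
  (Finset.univ.filter (fun σ : Equiv.Perm (Fin m) => firstEven m σ ∧ desEndE m σ = k)).card

def Q0 (k m : ℕ) : ℕ :=
  (Finset.univ.filter (fun σ : Equiv.Perm (Fin m) => firstEven m σ ∧ desEndO m σ = k)).card

def Q1 (k m : ℕ) : ℕ :=
  (Finset.univ.filter (fun σ : Equiv.Perm (Fin m) => firstOdd m σ ∧ desEndO m σ = k)).card


open Finset

variable {m : ℕ}

/-- successor position (junk if at the end). -/
def nxt (j : Fin m) : Fin m := if h : (j:ℕ)+1 < m then ⟨(j:ℕ)+1, h⟩ else j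

def zrev [NeZero m] (z : Fin m) : Fin m :=
  ⟨m - 1 - (z:ℕ), by have := z.isLt; omega⟩

def posMap [NeZero m] (z : Fin m) (t : Fin m) : Fin m :=
  if h1 : (z:ℕ)+1+(t:ℕ) < m then ⟨(z:ℕ)+1+(t:ℕ), h1⟩
  else if h2 : (z:ℕ)+1+(t:ℕ) = m then z
  else ⟨(z:ℕ)+1+(t:ℕ) - (m+1), by have := z.isLt; have := t.isLt; omega⟩

lemma zrev_zrev [NeZero m] (z : Fin m) : zrev (zrev z) = z := by
  have := z.isLt
  apply Fin.ext
  simp only [zrev]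
  omega

lemma posMap_val [NeZero m] (z t : Fin m) : ((posMap z t : Fin m) : ℕ) =
    if (z:ℕ)+1+(t:ℕ) < m then (z:ℕ)+1+(t:ℕ)
    else if (z:ℕ)+1+(t:ℕ) = m then (z:ℕ) else (z:ℕ)+1+(t:ℕ) - (m+1) := by
  simp only [posMap]
  split_ifs <;> rfl

lemma zrev_val [NeZero m] (z : Fin m) : ((zrev z : Fin m) : ℕ) = m - 1 - (z:ℕ) := rfl

lemma posMap_posMap [NeZero m] (z t : Fin m) : posMap (zrev z) (posMap z t) = t := by
  have hz := z.isLt; have ht := t.isLt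
  apply Fin.ext
  rw [posMap_val, posMap_val, zrev_val]
  split_ifs <;> omega

def posEquiv [NeZero m] (z : Fin m) : Equiv.Perm (Fin m) :=
  ⟨posMap z, posMap (zrev z), posMap_posMap z, fun t => by
    have h := posMap_posMap (zrev z) t
    rwa [zrev_zrev] at h⟩

def negPerm [NeZero m] : Equiv.Perm (Fin m) :=
  Function.Involutive.toPerm (fun x => -x) neg_neg

def psi [NeZero m] (σ : Equiv.Perm (Fin m)) : Equiv.Perm (Fin m) :=
  (posEquiv (σ.symm 0)).trans (σ.trans negPerm)

lemma psi_apply [NeZero m] (σ : Equiv.Perm (Fin m)) (t : Fin m) :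
    psi σ t = -(σ (posMap (σ.symm 0) t)) := rfl

lemma val_neg' [NeZero m] (x : Fin m) (hx : x ≠ 0) : ((-x : Fin m) : ℕ) = m - (x:ℕ) := by
  have h1 : (x:ℕ) ≠ 0 := fun h => hx (Fin.ext (by rw [h, Fin.val_zero]))
  have h2 := x.isLt
  have hv : ((-x : Fin m) : ℕ) = (m - (x:ℕ)) % m := by rw [Fin.neg_def]
  rw [hv, Nat.mod_eq_of_lt (by omega)]

lemma psi_symm_zero [NeZero m] (σ : Equiv.Perm (Fin m)) :
    (psi σ).symm 0 = zrev (σ.symm 0) := by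
  have hz := (σ.symm 0).isLt
  rw [Equiv.symm_apply_eq, psi_apply]
  have hpm : posMap (σ.symm 0) (zrev (σ.symm 0)) = σ.symm 0 := by
    have h1 : ¬ ((σ.symm 0 : ℕ) + 1 + ((zrev (σ.symm 0) : Fin m) : ℕ) < m) := by
      simp only [zrev]; omega
    have h2 : ((σ.symm 0 : ℕ) + 1 + ((zrev (σ.symm 0) : Fin m) : ℕ) = m) := by
      simp only [zrev]; omega
    simp only [posMap, dif_neg h1, dif_pos h2]
  rw [hpm, Equiv.apply_symm_apply, neg_zero]

lemma psi_psi [NeZero m] (σ : Equiv.Perm (Fin m)) : psi (psi σ) = σ := by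
  apply Equiv.ext
  intro t
  rw [psi_apply, psi_symm_zero, psi_apply]
  have h := posMap_posMap (zrev (σ.symm 0)) t
  rw [zrev_zrev] at h
  rw [h, neg_neg]


def dInd (σ : Equiv.Perm (Fin m)) (j : Fin m) : ℕ :=
  if (j:ℕ)+1 < m ∧ σ (nxt j) < σ j ∧ Odd ((σ j : ℕ)) then 1 else 0

def aInd (σ : Equiv.Perm (Fin m)) (j : Fin m) : ℕ :=
  if (j:ℕ)+1 < m ∧ σ j < σ (nxt j) ∧ Odd ((σ j : ℕ)) then 1 else 0

def lInd (σ : Equiv.Perm (Fin m)) (j : Fin m) : ℕ :=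
  if (j:ℕ)+1 = m ∧ Odd ((σ j : ℕ)) then 1 else 0

lemma nxt_val (j : Fin m) (h : (j:ℕ)+1 < m) : ((nxt j : Fin m) : ℕ) = (j:ℕ)+1 := by
  simp only [nxt, dif_pos h]

lemma desBegE_eq_sum (σ : Equiv.Perm (Fin m)) :
    desBegE m σ = ∑ j : Fin m, dInd σ j := by
  have h1 : desBegE m σ = (univ.filter (fun j : Fin m =>
      (j:ℕ)+1 < m ∧ σ (nxt j) < σ j ∧ Odd ((σ j : ℕ)))).card := by
    rw [desBegE]
    apply Finset.card_bij (fun p _ => p.1)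
    · intro p hp
      simp only [mem_filter, mem_univ, true_and] at hp ⊢
      obtain ⟨h2, hlt, hev⟩ := hp
      have hj : (p.1:ℕ)+1 < m := h2 ▸ p.2.isLt
      have hn : nxt p.1 = p.2 := Fin.ext (by rw [nxt_val _ hj, h2])
      refine ⟨hj, by rwa [hn], ?_⟩
      rwa [Nat.even_add_one, Nat.not_even_iff_odd] at hev
    · intro p hp q hq h
      simp only [mem_filter, mem_univ, true_and] at hp hq
      have : p.2 = q.2 := Fin.ext (by rw [hp.1, hq.1, h])
      exact Prod.ext h this
    · intro j hj
      simp only [mem_filter, mem_univ, true_and] at hj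
      obtain ⟨h2, hlt, hod⟩ := hj
      refine ⟨(j, nxt j), ?_, rfl⟩
      simp only [mem_filter, mem_univ, true_and]
      refine ⟨nxt_val _ h2, hlt, ?_⟩
      rw [Nat.even_add_one, Nat.not_even_iff_odd]
      exact hod
  rw [h1, Finset.card_filter]
  rfl


lemma val_ne_zero [NeZero m] (x : Fin m) (hx : x ≠ 0) : (x:ℕ) ≠ 0 := by
  exact fun h => hx (Fin.ext (by rw [h, Fin.val_zero]))

lemma neg_lt_neg_iff [NeZero m] (x y : Fin m) (hx : x ≠ 0) (hy : y ≠ 0) :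
    -x < -y ↔ y < x := by
  have h1 := val_ne_zero x hx; have h2 := val_ne_zero y hy
  have h3 := x.isLt; have h4 := y.isLt
  rw [Fin.lt_def, Fin.lt_def, val_neg' x hx, val_neg' y hy]
  omega

lemma odd_neg {n : ℕ} [NeZero (2*n)] (x : Fin (2*n)) (hx : x ≠ 0) :
    Odd ((-x : Fin (2*n)) : ℕ) ↔ Odd ((x:ℕ)) := by
  have h1 := val_ne_zero x hx; have h3 := x.isLt
  rw [val_neg' x hx, Nat.odd_iff, Nat.odd_iff]
  omega

lemma count_odd_range (n : ℕ) : ∑ i ∈ range (2*n), (if Odd i then 1 else 0) = n := by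
  induction n with
  | zero => simp
  | succ n ih =>
    have h : 2*(n+1) = (2*n) + 1 + 1 := by ring
    rw [h, Finset.sum_range_succ, Finset.sum_range_succ, ih]
    have h1 : ¬ Odd (2*n) := by simp [Nat.odd_iff]
    have h2 : Odd (2*n+1) := by simp [Nat.odd_iff]
    simp [h1, h2]

lemma sum_oInd {n : ℕ} (σ : Equiv.Perm (Fin (2*n))) :
    ∑ j : Fin (2*n), (if Odd ((σ j : ℕ)) then 1 else 0) = n := by
  rw [Equiv.sum_comp σ (fun v : Fin (2*n) => if Odd ((v : ℕ)) then 1 else 0)]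
  rw [Fin.sum_univ_eq_sum_range (fun i => if Odd i then 1 else 0) (2*n)]
  exact count_odd_range n

lemma ind_partition (σ : Equiv.Perm (Fin m)) (j : Fin m) :
    dInd σ j + aInd σ j + lInd σ j = if Odd ((σ j : ℕ)) then 1 else 0 := by
  by_cases hj : (j:ℕ)+1 < m
  · have hne : σ (nxt j) ≠ σ j := by
      intro h
      have := σ.injective h
      have h2 := nxt_val j hj
      rw [this] at h2
      omega
    have hjm : ¬ ((j:ℕ)+1 = m) := by omega
    rcases lt_or_gt_of_ne hne with h | h
    · simp [dInd, aInd, lInd, hj, hjm, h, h.asymm]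
    · simp [dInd, aInd, lInd, hj, hjm, h, h.asymm]
  · have hjm : (j:ℕ)+1 = m := by have := j.isLt; omega
    simp [dInd, aInd, lInd, hj, hjm]

lemma apply_ne_zero [NeZero m] (σ : Equiv.Perm (Fin m)) (p : Fin m)
    (hp : p ≠ σ.symm 0) : σ p ≠ 0 := by
  intro h
  exact hp (by rw [← h, Equiv.symm_apply_apply])

lemma dInd_psi {n : ℕ} [NeZero (2*n)] (σ : Equiv.Perm (Fin (2*n))) (t : Fin (2*n)) :
    dInd (psi σ) t = aInd σ (posMap (σ.symm 0) t) + lInd σ (posMap (σ.symm 0) t) := by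
  set z := σ.symm 0 with hzdef
  have hσz : σ z = 0 := σ.apply_symm_apply 0
  have hzm := z.isLt
  have htm := t.isLt
  by_cases h1 : (z:ℕ)+1+(t:ℕ) < 2*n
  · have hpm : posMap z t = ⟨(z:ℕ)+1+(t:ℕ), h1⟩ := by
      apply Fin.ext; rw [posMap_val]; simp [h1]
    have hv1 : ((⟨(z:ℕ)+1+(t:ℕ), h1⟩ : Fin (2*n)) : ℕ) = (z:ℕ)+1+(t:ℕ) := rfl
    have hKne : (⟨(z:ℕ)+1+(t:ℕ), h1⟩ : Fin (2*n)) ≠ z := by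
      intro h; rw [Fin.ext_iff, hv1] at h; omega
    have hσK : σ ⟨(z:ℕ)+1+(t:ℕ), h1⟩ ≠ 0 := apply_ne_zero σ _ hKne
    by_cases h2 : (z:ℕ)+1+(t:ℕ)+1 < 2*n
    · -- case 1 : interior pair
      have htlt : (t:ℕ)+1 < 2*n := by omega
      have hnt : nxt t = ⟨(t:ℕ)+1, htlt⟩ := by
        apply Fin.ext; rw [nxt_val t htlt]
      have hpm2 : posMap z (nxt t) = ⟨(z:ℕ)+1+(t:ℕ)+1, h2⟩ := by
        apply Fin.ext; rw [hnt, posMap_val]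
        have hv : ((⟨(t:ℕ)+1, htlt⟩ : Fin (2*n)) : ℕ) = (t:ℕ)+1 := rfl
        have hv2 : ((⟨(z:ℕ)+1+(t:ℕ)+1, h2⟩ : Fin (2*n)) : ℕ) = (z:ℕ)+1+(t:ℕ)+1 := rfl
        rw [hv, if_pos (by omega), hv2]
        omega
      have hv2 : ((⟨(z:ℕ)+1+(t:ℕ)+1, h2⟩ : Fin (2*n)) : ℕ) = (z:ℕ)+1+(t:ℕ)+1 := rfl
      have hK1ne : (⟨(z:ℕ)+1+(t:ℕ)+1, h2⟩ : Fin (2*n)) ≠ z := by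
        intro h; rw [Fin.ext_iff, hv2] at h; omega
      have hσK1 : σ ⟨(z:ℕ)+1+(t:ℕ)+1, h2⟩ ≠ 0 := apply_ne_zero σ _ hK1ne
      have hnxtK : nxt (⟨(z:ℕ)+1+(t:ℕ), h1⟩ : Fin (2*n)) = ⟨(z:ℕ)+1+(t:ℕ)+1, h2⟩ := by
        apply Fin.ext; rw [nxt_val _ (by rw [hv1]; omega), hv1, hv2]
      have hl : lInd σ ⟨(z:ℕ)+1+(t:ℕ), h1⟩ = 0 := by
        rw [lInd, if_neg]; rintro ⟨ha, -⟩; rw [hv1] at ha; omega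
      rw [hpm, hl, Nat.add_zero, dInd, aInd]
      rw [psi_apply, psi_apply, ← hzdef, hpm, hpm2, hnxtK]
      refine if_congr ?_ rfl rfl
      rw [neg_lt_neg_iff _ _ hσK1 hσK, odd_neg _ hσK, hv1]
      constructor
      · rintro ⟨-, hb, hc⟩; exact ⟨by omega, hb, hc⟩
      · rintro ⟨-, hb, hc⟩; exact ⟨htlt, hb, hc⟩
    · -- case 2 : pair ending at the sentinel
      have hk : (z:ℕ)+1+(t:ℕ)+1 = 2*n := by omega
      have htlt : (t:ℕ)+1 < 2*n := by omega
      have hnt : nxt t = ⟨(t:ℕ)+1, htlt⟩ := by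
        apply Fin.ext; rw [nxt_val t htlt]
      have hpm2 : posMap z (nxt t) = z := by
        apply Fin.ext; rw [hnt, posMap_val]
        have hv : ((⟨(t:ℕ)+1, htlt⟩ : Fin (2*n)) : ℕ) = (t:ℕ)+1 := rfl
        rw [hv, if_neg (by omega), if_pos (by omega)]
      have ha : aInd σ ⟨(z:ℕ)+1+(t:ℕ), h1⟩ = 0 := by
        rw [aInd, if_neg]; rintro ⟨ha, -⟩; rw [hv1] at ha; omega
      rw [hpm, ha, Nat.zero_add, dInd, lInd]
      rw [psi_apply, psi_apply, ← hzdef, hpm, hpm2, hσz, neg_zero]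
      have hpos : (0 : Fin (2*n)) < -(σ ⟨(z:ℕ)+1+(t:ℕ), h1⟩) := by
        have hlt := (σ ⟨(z:ℕ)+1+(t:ℕ), h1⟩).isLt
        have hne := val_ne_zero _ hσK
        simp only [Fin.lt_def, Fin.val_zero, val_neg' _ hσK]
        omega
      refine if_congr ?_ rfl rfl
      rw [odd_neg _ hσK, hv1]
      constructor
      · rintro ⟨-, -, hc⟩; exact ⟨by omega, hc⟩
      · rintro ⟨-, hc⟩; exact ⟨htlt, hpos, hc⟩
  · by_cases h4 : (z:ℕ)+1+(t:ℕ) = 2*n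
    · -- case 3 : t is the image of the sentinel position
      have hpm : posMap z t = z := by
        apply Fin.ext; rw [posMap_val]
        rw [if_neg (by omega), if_pos (by omega)]
      have hψt : psi σ t = 0 := by rw [psi_apply, ← hzdef, hpm, hσz, neg_zero]
      rw [hpm, dInd, aInd, lInd, hψt, hσz]
      simp [Nat.odd_iff]
    · -- case 4 : wrapped-around positions
      have hzpos : 1 ≤ (z:ℕ) := by omega
      have hjlt : (z:ℕ)+1+(t:ℕ) - (2*n+1) < 2*n := by omega
      have hpm : posMap z t = ⟨(z:ℕ)+1+(t:ℕ) - (2*n+1), hjlt⟩ := by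
        apply Fin.ext; rw [posMap_val]
        rw [if_neg (by omega), if_neg (by omega)]
      have hv1 : ((⟨(z:ℕ)+1+(t:ℕ) - (2*n+1), hjlt⟩ : Fin (2*n)) : ℕ) =
          (z:ℕ)+1+(t:ℕ) - (2*n+1) := rfl
      by_cases h5 : (t:ℕ)+1 < 2*n
      · -- case 4b : interior wrapped pair
        have hKne : (⟨(z:ℕ)+1+(t:ℕ) - (2*n+1), hjlt⟩ : Fin (2*n)) ≠ z := by
          intro h; rw [Fin.ext_iff, hv1] at h; omega
        have hσK : σ ⟨(z:ℕ)+1+(t:ℕ) - (2*n+1), hjlt⟩ ≠ 0 := apply_ne_zero σ _ hKne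
        have hj1lt : (z:ℕ)+1+(t:ℕ) - (2*n+1) + 1 < 2*n := by omega
        have hv2 : ((⟨(z:ℕ)+1+(t:ℕ) - (2*n+1) + 1, hj1lt⟩ : Fin (2*n)) : ℕ) =
            (z:ℕ)+1+(t:ℕ) - (2*n+1) + 1 := rfl
        have hnt : nxt t = ⟨(t:ℕ)+1, h5⟩ := by
          apply Fin.ext; rw [nxt_val t h5]
        have hpm2 : posMap z (nxt t) = ⟨(z:ℕ)+1+(t:ℕ) - (2*n+1) + 1, hj1lt⟩ := by
          apply Fin.ext; rw [hnt, posMap_val]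
          have hv : ((⟨(t:ℕ)+1, h5⟩ : Fin (2*n)) : ℕ) = (t:ℕ)+1 := rfl
          rw [hv, if_neg (by omega), if_neg (by omega), hv2]
          omega
        have hK1ne : (⟨(z:ℕ)+1+(t:ℕ) - (2*n+1) + 1, hj1lt⟩ : Fin (2*n)) ≠ z := by
          intro h; rw [Fin.ext_iff, hv2] at h; omega
        have hσK1 : σ ⟨(z:ℕ)+1+(t:ℕ) - (2*n+1) + 1, hj1lt⟩ ≠ 0 := apply_ne_zero σ _ hK1ne
        have hnxtK : nxt (⟨(z:ℕ)+1+(t:ℕ) - (2*n+1), hjlt⟩ : Fin (2*n)) =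
            ⟨(z:ℕ)+1+(t:ℕ) - (2*n+1) + 1, hj1lt⟩ := by
          apply Fin.ext; rw [nxt_val _ (by rw [hv1]; omega), hv1, hv2]
        have hl : lInd σ ⟨(z:ℕ)+1+(t:ℕ) - (2*n+1), hjlt⟩ = 0 := by
          rw [lInd, if_neg]; rintro ⟨ha, -⟩; rw [hv1] at ha; omega
        rw [hpm, hl, Nat.add_zero, dInd, aInd]
        rw [psi_apply, psi_apply, ← hzdef, hpm, hpm2, hnxtK]
        refine if_congr ?_ rfl rfl
        rw [neg_lt_neg_iff _ _ hσK1 hσK, odd_neg _ hσK, hv1]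
        constructor
        · rintro ⟨-, hb, hc⟩; exact ⟨by omega, hb, hc⟩
        · rintro ⟨-, hb, hc⟩; exact ⟨h5, hb, hc⟩
      · -- case 4a : t is the last position
        have ht1 : (t:ℕ)+1 = 2*n := by omega
        have hnxtj : nxt (⟨(z:ℕ)+1+(t:ℕ) - (2*n+1), hjlt⟩ : Fin (2*n)) = z := by
          apply Fin.ext; rw [nxt_val _ (by rw [hv1]; omega), hv1]
          omega
        have hd : dInd (psi σ) t = 0 := by
          rw [dInd, if_neg]; rintro ⟨ha, -⟩; omega
        have ha : aInd σ ⟨(z:ℕ)+1+(t:ℕ) - (2*n+1), hjlt⟩ = 0 := by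
          rw [aInd, if_neg]; rintro ⟨-, hlt, -⟩
          rw [hnxtj, hσz] at hlt
          rw [Fin.lt_def, Fin.val_zero] at hlt
          omega
        have hl : lInd σ ⟨(z:ℕ)+1+(t:ℕ) - (2*n+1), hjlt⟩ = 0 := by
          rw [lInd, if_neg]; rintro ⟨ha2, -⟩; rw [hv1] at ha2; omega
        rw [hpm, hd, ha, hl]

lemma desBegE_psi_add {n : ℕ} [NeZero (2*n)] (σ : Equiv.Perm (Fin (2*n))) :
    desBegE (2*n) (psi σ) + desBegE (2*n) σ = n := by
  rw [desBegE_eq_sum, desBegE_eq_sum]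
  calc ∑ t, dInd (psi σ) t + ∑ j, dInd σ j
      = ∑ t, (aInd σ (posMap (σ.symm 0) t) + lInd σ (posMap (σ.symm 0) t)) + ∑ j, dInd σ j := by
        rw [Finset.sum_congr rfl (fun t _ => dInd_psi σ t)]
    _ = ∑ j, (aInd σ j + lInd σ j) + ∑ j, dInd σ j := by
        congr 1
        exact Equiv.sum_comp (posEquiv (σ.symm 0)) (fun j => aInd σ j + lInd σ j)
    _ = ∑ j, (dInd σ j + aInd σ j + lInd σ j) := by
        rw [← Finset.sum_add_distrib]
        apply Finset.sum_congr rfl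
        intros
        ring
    _ = ∑ j, (if Odd ((σ j : ℕ)) then 1 else 0) :=
        Finset.sum_congr rfl (fun j _ => ind_partition σ j)
    _ = n := sum_oInd σ


theorem stmt_19 (n k : ℕ) (hn : 1 ≤ n) (hk : k ≤ n) :
    R k (2*n) = R (n-k) (2*n) := by
  haveI : NeZero (2*n) := ⟨by omega⟩
  rw [R, R]
  apply Finset.card_bij (fun σ _ => psi σ)
  · intro σ hσ
    simp only [mem_filter, mem_univ, true_and] at hσ ⊢
    have h := desBegE_psi_add σ
    omega
  · intro σ hσ τ hτ h
    have := congrArg psi h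
    rwa [psi_psi, psi_psi] at this
  · intro τ hτ
    simp only [mem_filter, mem_univ, true_and] at hτ
    refine ⟨psi τ, ?_, psi_psi τ⟩
    simp only [mem_filter, mem_univ, true_and]
    have h := desBegE_psi_add τ
    omega


end DescentParity
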